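/- Let M₀ be a self-adjoint operator on L²((0,∞), r dr)² with M₀ ≥ 0, and suppose there exist ξ, η with M₀ξ = η, η ≥ 0 componentwise, η ≢ 0, such that every nonzero element ζ of ker(M₀) satisfies ζ > 0 or ζ < 0 componentwise everywhere (Perron–Frobenius property). Then ker(M₀) = {0}. (Proof: if M₀ζ = 0 with ζ > 0, then 0 = ⟨M₀ζ, ξ⟩ = ⟨ζ, η⟩ > 0, a contradiction.) -/
import Mathlib


open Set MeasureTheory

/-- The measure `r dr` on `(0,∞)`. -/
noncomputable def rmeasure : Measure ℝ :=
  (volume.restrict (Set.Ioi (0:ℝ))).withDensity fun r => ENNReal.ofReal r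

open Filter in
lemma key_pos_stmt16 (f : ℝ → ℝ) (hint : Integrable f rmeasure)
    (h0 : ∫ r, f r ∂rmeasure = 0)
    (hnn : ∀ r ∈ Ioi (0:ℝ), 0 ≤ f r)
    (hc : ContinuousOn f (Ioi 0))
    (r₁ : ℝ) (hr₁ : r₁ ∈ Ioi (0:ℝ)) (hf₁ : 0 < f r₁) : False := by
  have hae : 0 ≤ᵐ[rmeasure] f := by
    have h1 : ∀ᵐ r ∂(volume.restrict (Ioi (0:ℝ))), 0 ≤ f r :=
      (ae_restrict_iff' measurableSet_Ioi).2 (ae_of_all _ hnn)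
    exact (withDensity_absolutelyContinuous _ _).ae_le h1
  have hca : ContinuousAt f r₁ := hc.continuousAt (isOpen_Ioi.mem_nhds hr₁)
  have hev : ∀ᶠ x in nhds r₁, 0 < f x := hca.eventually (eventually_gt_nhds hf₁)
  obtain ⟨l, u, hru, hsub⟩ := mem_nhds_iff_exists_Ioo_subset.1 hev
  set a := max l (r₁ / 2) with ha
  have hr₁0 : (0:ℝ) < r₁ := hr₁
  have ha0 : 0 < a := lt_max_of_lt_right (by linarith)
  have har : a < r₁ := max_lt hru.1 (by linarith)
  have hau : a < u := har.trans hru.2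
  have hsub2 : Ioo a u ⊆ Function.support f := fun x hx =>
    ne_of_gt (hsub ⟨lt_of_le_of_lt (le_max_left _ _) hx.1, hx.2⟩)
  have hmeas : 0 < rmeasure (Ioo a u) := by
    rw [rmeasure, withDensity_apply _ measurableSet_Ioo]
    have hle : ENNReal.ofReal a * (volume.restrict (Ioi (0:ℝ))) (Ioo a u)
        ≤ ∫⁻ r in Ioo a u, ENNReal.ofReal r ∂(volume.restrict (Ioi (0:ℝ))) := by
      rw [← setLIntegral_const]
      exact setLIntegral_mono' measurableSet_Ioo fun x hx =>
        ENNReal.ofReal_le_ofReal hx.1.le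
    refine lt_of_lt_of_le ?_ hle
    rw [Measure.restrict_apply measurableSet_Ioo]
    have hss : Ioo a u ∩ Ioi (0:ℝ) = Ioo a u := by
      apply inter_eq_left.2
      intro x hx; exact ha0.trans hx.1
    rw [hss, Real.volume_Ioo]
    exact ENNReal.mul_pos (by simpa using ha0) (by simp [hau, sub_pos])
  have hpos : 0 < rmeasure (Function.support f) :=
    lt_of_lt_of_le hmeas (measure_mono hsub2)
  have := (integral_pos_iff_support_of_nonneg_ae hae hint).2 hpos
  rw [h0] at this
  exact lt_irrefl 0 this

/-- abstract kernel-triviality lemma. Let `M₀` be a symmetric, non-negative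
operator on (a function realization of) `L²((0,∞), r dr)²`, suppose `M₀ξ = η` with
`η ≥ 0`, `η ≢ 0`, and every nonzero kernel element is strictly positive or strictly
negative componentwise everywhere (Perron–Frobenius property). Then `ker M₀ = {0}`. -/
theorem stmt16 (M : (ℝ → Fin 2 → ℝ) →ₗ[ℝ] (ℝ → Fin 2 → ℝ))
    -- symmetry of M₀ w.r.t. the L²(r dr) pairing:
    (hsym : ∀ u v : ℝ → Fin 2 → ℝ,
      (∫ r, (∑ k, M u r k * v r k) ∂rmeasure) = ∫ r, (∑ k, u r k * M v r k) ∂rmeasure)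
    -- non-negativity M₀ ≥ 0:
    (hnonneg : ∀ u : ℝ → Fin 2 → ℝ, 0 ≤ ∫ r, (∑ k, u r k * M u r k) ∂rmeasure)
    (ξ η : ℝ → Fin 2 → ℝ)
    (hMξ : M ξ = η)
    (hηnonneg : ∀ r ∈ Ioi (0:ℝ), ∀ k, 0 ≤ η r k)
    (hηcont : ∀ k, ContinuousOn (fun r => η r k) (Ioi 0))
    (hηne : ∃ r ∈ Ioi (0:ℝ), η r ≠ 0)
    -- Perron–Frobenius property of kernel elements:
    (hPF : ∀ ζ : ℝ → Fin 2 → ℝ, M ζ = 0 → (∃ r ∈ Ioi (0:ℝ), ζ r ≠ 0) →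
      (∀ r ∈ Ioi (0:ℝ), ∀ k, 0 < ζ r k) ∨ (∀ r ∈ Ioi (0:ℝ), ∀ k, ζ r k < 0))
    -- continuity and integrability needed so that the pairings make sense:
    (hker_cont : ∀ ζ : ℝ → Fin 2 → ℝ, M ζ = 0 → ∀ k, ContinuousOn (fun r => ζ r k) (Ioi 0))
    (hker_int : ∀ ζ : ℝ → Fin 2 → ℝ, M ζ = 0 →
      Integrable (fun r => ∑ k, ζ r k * η r k) rmeasure) :
    ∀ ζ : ℝ → Fin 2 → ℝ, M ζ = 0 → ∀ r ∈ Ioi (0:ℝ), ζ r = 0 := by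
  intro ζ hζ
  by_contra h
  push_neg at h
  obtain ⟨r₀, hr₀, hζr₀⟩ := h
  have hint := hker_int ζ hζ
  have hzero : ∫ r, (∑ k, ζ r k * η r k) ∂rmeasure = 0 := by
    have h1 := hsym ζ ξ
    rw [hζ, hMξ] at h1
    simpa using h1.symm
  have hcont : ContinuousOn (fun r => ∑ k, ζ r k * η r k) (Ioi 0) := by
    apply continuousOn_finset_sum
    intro k _
    exact (hker_cont ζ hζ k).mul (hηcont k)
  obtain ⟨r₁, hr₁, hη₁⟩ := hηne
  obtain ⟨k₀, hk₀⟩ := Function.ne_iff.1 hη₁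
  have hηk₀ : 0 < η r₁ k₀ := (hηnonneg r₁ hr₁ k₀).lt_of_ne (Ne.symm hk₀)
  rcases hPF ζ hζ ⟨r₀, hr₀, hζr₀⟩ with hp | hn
  · exact key_pos_stmt16 _ hint hzero
      (fun r hr => Finset.sum_nonneg fun k _ =>
        mul_nonneg (hp r hr k).le (hηnonneg r hr k))
      hcont r₁ hr₁
      (Finset.sum_pos' (fun k _ => mul_nonneg (hp r₁ hr₁ k).le (hηnonneg r₁ hr₁ k))
        ⟨k₀, Finset.mem_univ _, mul_pos (hp r₁ hr₁ k₀) hηk₀⟩)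
  · refine key_pos_stmt16 (fun r => -(∑ k, ζ r k * η r k)) hint.neg ?_ ?_ hcont.neg r₁ hr₁ ?_
    · rw [integral_neg, hzero, neg_zero]
    · intro r hr
      simp only [Left.nonneg_neg_iff]
      exact Finset.sum_nonpos fun k _ =>
        mul_nonpos_of_nonpos_of_nonneg (hn r hr k).le (hηnonneg r hr k)
    · have := Finset.sum_pos' (fun k (_ : k ∈ Finset.univ) =>
          mul_nonneg (neg_nonneg.2 (hn r₁ hr₁ k).le) (hηnonneg r₁ hr₁ k))
        ⟨k₀, Finset.mem_univ _, mul_pos (neg_pos.2 (hn r₁ hr₁ k₀)) hηk₀⟩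
      simp only [neg_mul] at this
      rwa [Finset.sum_neg_distrib] at this
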